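/- In a cyclic assignment with Δ workers, each holding ℓ ≤ Δ consecutive symbols modulo Δ, the maximum number of symbols that can be processed across all workers such that a fixed symbol j is processed exactly c times (0 ≤ c ≤ ℓ) equals Δℓ - ℓ(ℓ+1)/2 + Σ_{i=0}^{c-1}(ℓ-i), and this value is independent of j. -/
import Mathlib

open Finset

private lemma aux_minsum (Q : Finset ℕ) : ∑ i ∈ Finset.range Q.card, i ≤ ∑ x ∈ Q, x := by
  induction Q using Finset.strongInduction with
  | _ Q ih =>
    rcases Q.eq_empty_or_nonempty with rfl | hQ
    · simp
    · have hM : Q.max' hQ ∈ Q := Q.max'_mem hQ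
      have h1 := ih (Q.erase (Q.max' hQ)) (Finset.erase_ssubset hM)
      have hcard : (Q.erase (Q.max' hQ)).card = Q.card - 1 := Finset.card_erase_of_mem hM
      have hsub : Q ⊆ Finset.range (Q.max' hQ + 1) := fun x hx =>
        Finset.mem_range.mpr (Nat.lt_succ_of_le (Q.le_max' x hx))
      have hcard_le : Q.card ≤ Q.max' hQ + 1 := by
        simpa using Finset.card_le_card hsub
      have hsum : ∑ x ∈ Q.erase (Q.max' hQ), x + Q.max' hQ = ∑ x ∈ Q, x :=
        Finset.sum_erase_add _ _ hM
      have hpos : 0 < Q.card := Finset.card_pos.mpr hQ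
      have hr : ∑ i ∈ Finset.range Q.card, i
          = ∑ i ∈ Finset.range (Q.card - 1), i + (Q.card - 1) := by
        conv_lhs => rw [show Q.card = (Q.card - 1) + 1 by omega]
        rw [Finset.sum_range_succ]
      rw [hcard] at h1
      omega

private lemma aux_gauss (ℓ : ℕ) : ℓ * ℓ = 2 * (∑ p ∈ Finset.range ℓ, p) + ℓ := by
  have h := Finset.sum_range_id_mul_two ℓ
  cases ℓ with
  | zero => simp
  | succ n =>
    have : (n+1) * (n+1) = (n+1) * n + (n+1) := by ring
    simp only [Nat.add_sub_cancel] at h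
    omega

private lemma aux_div (ℓ : ℕ) : ℓ * (ℓ + 1) / 2 = (∑ p ∈ Finset.range ℓ, p) + ℓ := by
  have h := aux_gauss (ℓ + 1)
  rw [Finset.sum_range_succ] at h
  have : (ℓ+1)*(ℓ+1) = ℓ*(ℓ+1) + (ℓ+1) := by ring
  omega

private lemma aux_key (Δ ℓ c : ℕ) (hΔ : 0 < Δ) (hℓ : ℓ ≤ Δ) (hc : c ≤ ℓ) :
    Δ * ℓ - ℓ * (ℓ + 1) / 2 + ∑ i ∈ Finset.range c, (ℓ - i)
      = c * ℓ + ((∑ p ∈ Finset.range ℓ, p) + (Δ - ℓ) * ℓ) - ∑ i ∈ Finset.range c, i := by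
  have h1 : (∑ i ∈ Finset.range c, (ℓ - i)) + ∑ i ∈ Finset.range c, i = c * ℓ := by
    rw [← Finset.sum_add_distrib]
    rw [Finset.sum_congr rfl (fun i hi => by
      have : i < c := Finset.mem_range.mp hi
      omega : ∀ i ∈ Finset.range c, ℓ - i + i = ℓ)]
    simp [mul_comm]
  have hScS : (∑ i ∈ Finset.range c, i) ≤ ∑ p ∈ Finset.range ℓ, p :=
    Finset.sum_le_sum_of_subset (Finset.range_subset_range.mpr hc)
  have hY : ℓ * ℓ ≤ Δ * ℓ := Nat.mul_le_mul_right ℓ hℓ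
  have hA : c * ℓ ≤ ℓ * ℓ := Nat.mul_le_mul_right ℓ hc
  have hsm : (Δ - ℓ) * ℓ = Δ * ℓ - ℓ * ℓ := Nat.sub_mul Δ ℓ ℓ
  have hg := aux_gauss ℓ
  rw [aux_div, hsm]
  omega

private lemma aux_summin (Δ ℓ : ℕ) (hℓ : ℓ ≤ Δ) :
    ∑ p ∈ Finset.range Δ, min p ℓ = (∑ p ∈ Finset.range ℓ, p) + (Δ - ℓ) * ℓ := by
  rw [Finset.range_eq_Ico, ← Finset.sum_Ico_consecutive _ (Nat.zero_le ℓ) hℓ,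
    Nat.Ico_zero_eq_range]
  congr 1
  · exact Finset.sum_congr rfl fun p hp => min_eq_left (le_of_lt (Finset.mem_range.mp hp))
  · rw [Finset.sum_congr rfl (fun p hp => min_eq_right ((Finset.mem_Ico.mp hp).1) :
      ∀ p ∈ Finset.Ico ℓ Δ, min p ℓ = ℓ), Finset.sum_const, Nat.card_Ico, smul_eq_mul]

private lemma aux_sumf (Δ ℓ c : ℕ) (hℓ : ℓ ≤ Δ) (hc : c ≤ ℓ) :
    ∑ p ∈ Finset.range Δ, (if p < c ∨ ℓ ≤ p then ℓ else p)
      = c * ℓ + ((∑ p ∈ Finset.range ℓ, p) + (Δ - ℓ) * ℓ) - ∑ i ∈ Finset.range c, i := by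
  have hsplit : (∑ i ∈ Finset.range c, i) + ∑ p ∈ Finset.Ico c ℓ, p
      = ∑ p ∈ Finset.range ℓ, p := by
    have := Finset.sum_Ico_consecutive (fun p => p) (Nat.zero_le c) hc
    simpa [Nat.Ico_zero_eq_range] using this
  rw [Finset.range_eq_Ico, ← Finset.sum_Ico_consecutive _ (Nat.zero_le c) (hc.trans hℓ),
    ← Finset.sum_Ico_consecutive _ hc hℓ, Nat.Ico_zero_eq_range]
  have e1 : ∑ p ∈ Finset.range c, (if p < c ∨ ℓ ≤ p then ℓ else p) = c * ℓ := by
    rw [Finset.sum_congr rfl (fun p hp => by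
      rw [if_pos (Or.inl (Finset.mem_range.mp hp))] : ∀ p ∈ Finset.range c,
        (if p < c ∨ ℓ ≤ p then ℓ else p) = ℓ), Finset.sum_const, Finset.card_range, smul_eq_mul]
  have e2 : ∑ p ∈ Finset.Ico c ℓ, (if p < c ∨ ℓ ≤ p then ℓ else p)
      = ∑ p ∈ Finset.Ico c ℓ, p := by
    refine Finset.sum_congr rfl (fun p hp => ?_)
    have := Finset.mem_Ico.mp hp
    rw [if_neg (by omega)]
  have e3 : ∑ p ∈ Finset.Ico ℓ Δ, (if p < c ∨ ℓ ≤ p then ℓ else p) = (Δ - ℓ) * ℓ := by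
    rw [Finset.sum_congr rfl (fun p hp => by
      rw [if_pos (Or.inr (Finset.mem_Ico.mp hp).1)] : ∀ p ∈ Finset.Ico ℓ Δ,
        (if p < c ∨ ℓ ≤ p then ℓ else p) = ℓ), Finset.sum_const, Nat.card_Ico, smul_eq_mul]
  rw [e1, e2, e3]
  omega



/-- Cyclic assignment with `Δ` workers each holding the `ℓ ≤ Δ` consecutive symbols
`w, ..., w + ℓ - 1 (mod Δ)`, processed sequentially from position `0`.  A processing pattern is
`t : Fin Δ → ℕ` with `t w ≤ ℓ`, meaning worker `w` has processed its first `t w` symbols;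
symbol `j` is processed in worker `w` iff its position `(j - w) mod Δ` is `< t w`.
The maximum total number of processed symbols such that the fixed symbol `j` is processed
exactly `c` times (`0 ≤ c ≤ ℓ`) is `Δℓ - ℓ(ℓ+1)/2 + Σ_{i=0}^{c-1}(ℓ-i)`, independent of `j`. -/
theorem stmt1 (Δ ℓ c : ℕ) (hΔ : 0 < Δ) (hℓ : ℓ ≤ Δ) (hc : c ≤ ℓ) (j : Fin Δ) :
    IsGreatest
      { q : ℕ | ∃ t : Fin Δ → ℕ, (∀ w, t w ≤ ℓ) ∧
          (Finset.univ.filter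
            (fun w : Fin Δ => ((j : ℕ) + Δ - (w : ℕ)) % Δ < t w)).card = c ∧
          q = ∑ w, t w }
      (Δ * ℓ - ℓ * (ℓ + 1) / 2 + ∑ i ∈ Finset.range c, (ℓ - i)) := by
  haveI : NeZero Δ := ⟨hΔ.ne'⟩
  have hval : ∀ w : Fin Δ, ((j : ℕ) + Δ - (w : ℕ)) % Δ = ((j - w : Fin Δ) : ℕ) := by
    intro w
    have hw := w.isLt
    simp only [Fin.sub_def]
    congr 1
    omega
  have hcancel : ∀ v : Fin Δ, j - (j - v) = v := fun v => sub_sub_cancel j v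
  have hsum : ∀ g : ℕ → ℕ, ∑ w : Fin Δ, g ((j - w : Fin Δ) : ℕ) = ∑ p ∈ Finset.range Δ, g p := by
    intro g
    rw [← Fin.sum_univ_eq_sum_range]
    calc ∑ w : Fin Δ, g ((j - w : Fin Δ) : ℕ)
        = ∑ v : Fin Δ, g ((j - (j - v) : Fin Δ) : ℕ) :=
          (Equiv.sum_comp (Equiv.subLeft j) (fun w => g ((j - w : Fin Δ) : ℕ))).symm
      _ = ∑ v : Fin Δ, g (v : ℕ) := by simp only [hcancel]
  have hcard : ∀ (t : Fin Δ → ℕ),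
      (Finset.univ.filter fun w : Fin Δ => ((j - w : Fin Δ) : ℕ) < t w).card
        = (Finset.univ.filter fun v : Fin Δ => (v : ℕ) < t (j - v)).card := by
    intro t
    apply Finset.card_bij' (fun w _ => j - w) (fun v _ => j - v)
    · intro w hw
      simp only [Finset.mem_filter, Finset.mem_univ, true_and] at hw ⊢
      rwa [hcancel]
    · intro v hv
      simp only [Finset.mem_filter, Finset.mem_univ, true_and] at hv ⊢
      rwa [hcancel]
    · intro w _; exact hcancel w
    · intro v _; exact hcancel v
  constructor
  · -- membership
    refine ⟨fun w => if ((j : ℕ) + Δ - (w : ℕ)) % Δ < c ∨ ℓ ≤ ((j : ℕ) + Δ - (w : ℕ)) % Δ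
      then ℓ else ((j : ℕ) + Δ - (w : ℕ)) % Δ, ?_, ?_, ?_⟩
    · intro w
      have hw : ((j : ℕ) + Δ - (w : ℕ)) % Δ < Δ := Nat.mod_lt _ hΔ
      by_cases h : ((j : ℕ) + Δ - (w : ℕ)) % Δ < c ∨ ℓ ≤ ((j : ℕ) + Δ - (w : ℕ)) % Δ
      · simp only [if_pos h]
        exact le_refl ℓ
      · simp only [if_neg h]
        push_neg at h
        omega
    · simp only [hval]
      rw [hcard (fun w => if ((j - w : Fin Δ) : ℕ) < c ∨ ℓ ≤ ((j - w : Fin Δ) : ℕ)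
        then ℓ else ((j - w : Fin Δ) : ℕ))]
      simp only [hcancel]
      rw [Finset.card_filter]
      rw [Fin.sum_univ_eq_sum_range
        (fun p => if p < (if p < c ∨ ℓ ≤ p then ℓ else p) then 1 else 0)]
      rw [← Finset.card_filter]
      have : (Finset.range Δ).filter (fun p => p < (if p < c ∨ ℓ ≤ p then ℓ else p))
          = Finset.range c := by
        ext p
        simp only [Finset.mem_filter, Finset.mem_range]
        by_cases h1 : p < c ∨ ℓ ≤ p <;> simp only [h1, if_true, if_false] <;> omega
      rw [this, Finset.card_range]
    · simp only [hval]
      rw [hsum (fun p => if p < c ∨ ℓ ≤ p then ℓ else p),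
        aux_sumf Δ ℓ c hℓ hc, aux_key Δ ℓ c hΔ hℓ hc]
  · -- upper bound
    rintro q ⟨t, ht, hcd, rfl⟩
    simp only [hval] at hcd
    rw [hcard t] at hcd
    have hqe : ∑ w, t w = ∑ v : Fin Δ, t (j - v) :=
      (Equiv.sum_comp (Equiv.subLeft j) t).symm
    rw [hqe, aux_key Δ ℓ c hΔ hℓ hc]
    have hsplit := Finset.sum_filter_add_sum_filter_not Finset.univ
      (fun v : Fin Δ => (v : ℕ) < t (j - v)) (fun v => t (j - v))
    set P := Finset.univ.filter (fun v : Fin Δ => (v : ℕ) < t (j - v)) with hPdef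
    have hb1 : ∑ v ∈ P, t (j - v) ≤ c * ℓ := by
      calc ∑ v ∈ P, t (j - v) ≤ ∑ v ∈ P, ℓ := Finset.sum_le_sum fun v _ => ht _
        _ = c * ℓ := by rw [Finset.sum_const, hcd, smul_eq_mul]
    have hb2 : ∑ v ∈ Finset.univ.filter (fun v : Fin Δ => ¬ ((v : ℕ) < t (j - v))), t (j - v)
        ≤ ∑ v ∈ Finset.univ.filter (fun v : Fin Δ => ¬ ((v : ℕ) < t (j - v))),
            min (v : ℕ) ℓ := by
      refine Finset.sum_le_sum fun v hv => ?_
      have h1 := (Finset.mem_filter.mp hv).2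
      exact le_min (by omega) (ht _)
    have hsplit2 := Finset.sum_filter_add_sum_filter_not Finset.univ
      (fun v : Fin Δ => (v : ℕ) < t (j - v)) (fun v : Fin Δ => min (v : ℕ) ℓ)
    have hmin : ∑ v : Fin Δ, min (v : ℕ) ℓ
        = (∑ p ∈ Finset.range ℓ, p) + (Δ - ℓ) * ℓ := by
      rw [Fin.sum_univ_eq_sum_range (fun p => min p ℓ), aux_summin Δ ℓ hℓ]
    have hPmin : ∑ v ∈ P, min (v : ℕ) ℓ = ∑ v ∈ P, (v : ℕ) := by
      refine Finset.sum_congr rfl fun v hv => ?_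
      have h1 := (Finset.mem_filter.mp hv).2
      have h2 := ht (j - v)
      exact min_eq_left (by omega)
    have hK : ∑ x ∈ P.image (Fin.val), x = ∑ v ∈ P, (v : ℕ) :=
      Finset.sum_image (fun a _ b _ h => Fin.val_injective h)
    have hKc : (P.image (Fin.val)).card = c := by
      rw [Finset.card_image_of_injective P Fin.val_injective, hcd]
    have hminsum := aux_minsum (P.image (Fin.val))
    rw [hKc] at hminsum
    rw [hPmin, ← hK] at hsplit2
    set S := ∑ p ∈ Finset.range ℓ, p
    set Sc := ∑ i ∈ Finset.range c, i
    set A := c * ℓ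
    set B := (Δ - ℓ) * ℓ
    omega
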